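/- Fix reals η, θ, t with s := θ − tη ≠ 0, and define the ℝ-linear operator H on ℝ[X] by H(p) = (1+ηX)·(p(X+s) − p)/s, where p(X+s) denotes the composition of p with X+s. Then H∘F − F∘H = id + η·F + s·H. -/

import Mathlib

open Polynomial

/-- The operator of multiplication by `X` on `ℝ[X]`. -/
noncomputable def F : Module.End ℝ (Polynomial ℝ) := LinearMap.mulLeft ℝ (X : Polynomial ℝ)

/-- For `s = θ − tη ≠ 0`, the operator `H(p) = (1+ηX)·(p(X+s) − p)/s` satisfies the
commutation equation `H∘F − F∘H = id + η·F + s·H`. -/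
theorem stmt15 (η θ t s : ℝ) (hs : s = θ - t * η) (hs0 : s ≠ 0)
    (H : Module.End ℝ (Polynomial ℝ))
    (hH : ∀ p : Polynomial ℝ, H p = (1 + Polynomial.C η * X) *
      (Polynomial.C (1 / s) * (p.comp (X + Polynomial.C s) - p))) :
    H * F - F * H = 1 + η • F + s • H := by
  apply LinearMap.ext; intro p
  simp only [LinearMap.sub_apply, LinearMap.add_apply, LinearMap.smul_apply, Module.End.one_apply,
    Module.End.mul_apply, hH, F, LinearMap.mulLeft_apply, mul_comp, X_comp]
  have h1 : Polynomial.C (1/s) * Polynomial.C s = 1 := by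
    rw [← C_mul]; field_simp; exact C_1
  have hsm : ∀ q : Polynomial ℝ, (s : ℝ) • q = Polynomial.C s * q := fun q => by
    rw [smul_eq_C_mul]
  have hηm : ∀ q : Polynomial ℝ, (η : ℝ) • q = Polynomial.C η * q := fun q => by
    rw [smul_eq_C_mul]
  rw [hsm, hηm]
  linear_combination p * (1 + Polynomial.C η * X) * h1
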